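/- Let (A, ∘) be an anti-pre-Lie algebra and ω a symmetric bilinear form on A satisfying the invariance condition ω(x∘y, z) = ω(y, [x,z]) where [x,z] = x∘z - z∘x. Then ω is a commutative 2-cocycle on the sub-adjacent Lie algebra (A, [,]), i.e., ω([x,y], z) + ω([y,z], x) + ω([z,x], y) = 0 for all x, y, z ∈ A. -/
import Mathlib


/-- An anti-pre-Lie algebra structure on a vector space `A`. -/
def IsAntiPreLie {k A : Type*} [Field k] [AddCommGroup A] [Module k A]
    (c : A →ₗ[k] A →ₗ[k] A) : Prop :=
  (∀ x y z, c x (c y z) - c y (c x z) = c (c y x - c x y) z) ∧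
  (∀ x y z, c (c x y - c y x) z + c (c y z - c z y) x + c (c z x - c x z) y = 0)

/-- a symmetric invariant bilinear form on an anti-pre-Lie algebra is a
commutative 2-cocycle on the sub-adjacent Lie algebra. -/
theorem invariant_form_commutative_two_cocycle {k A : Type*} [Field k] [AddCommGroup A]
    [Module k A] (c : A →ₗ[k] A →ₗ[k] A) (h : IsAntiPreLie c)
    (ω : A →ₗ[k] A →ₗ[k] k)
    (hsym : ∀ x y : A, ω x y = ω y x)
    (hinv : ∀ x y z : A, ω (c x y) z = ω y (c x z - c z x)) :
    ∀ x y z : A,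
      ω (c x y - c y x) z + ω (c y z - c z y) x + ω (c z x - c x z) y = 0 := by
  intro x y z
  have h1 := hinv x y z
  have h2 := hinv y x z
  have h3 := hinv x z y
  have h4 := hinv z x y
  have h5 := hinv y z x
  have h6 := hinv z y x
  have s1 := hsym y (c x z)
  have s2 := hsym y (c z x)
  have s3 := hsym x (c y z)
  have s4 := hsym x (c z y)
  have s5 := hsym z (c x y)
  have s6 := hsym z (c y x)
  simp only [map_sub, LinearMap.sub_apply] at *
  linear_combination h1 + s1 - s2 - h2 - s3 + s4
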